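/- arXiv:1305.6956 — 7 statements merged into one kernel-verified Lean document; each statement's English description precedes it below -/
import Mathlib

section
/- (Abstract form of Lemma 2.7) For every integer k ≥ 2 and every x ∈ M, if F(x) ∈ p^k • M then x ∈ p^{k-1} • M. -/
/-- **Abstract form of Lemma 2.7.**
`W = W(k₀)` is the ring of `p`-typical Witt vectors over a perfect field `k₀` of
characteristic `p`, `M` is a `p`-torsion-free `W`-module, and `F : M → M` is an additive
map commuting with multiplication by `p` and satisfying the Mazur-type condition
(`F x ∈ p² • M → x ∈ p • M`).  Then for every `k ≥ 2` and `x ∈ M`, if `F x ∈ p^k • M`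
then `x ∈ p^(k-1) • M`. -/
theorem muOrdinary_lemma_2_7 (p : ℕ) [Fact p.Prime] (k₀ : Type*) [Field k₀] [CharP k₀ p]
    [PerfectRing k₀ p]
    (M : Type*) [AddCommGroup M] [Module (WittVector p k₀) M]
    (htf : ∀ x : M, (p : WittVector p k₀) • x = 0 → x = 0)
    (F : M → M)
    (hFadd : ∀ x y : M, F (x + y) = F x + F y)
    (hFp : ∀ x : M, F ((p : WittVector p k₀) • x) = (p : WittVector p k₀) • F x)
    (hMazur : ∀ x : M, (∃ m : M, F x = (p : WittVector p k₀) ^ 2 • m) →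
      ∃ m : M, x = (p : WittVector p k₀) • m)
    (k : ℕ) (hk : 2 ≤ k) (x : M)
    (hx : ∃ m : M, F x = (p : WittVector p k₀) ^ k • m) :
    ∃ m : M, x = (p : WittVector p k₀) ^ (k - 1) • m := by
  induction k generalizing x with
  | zero => omega
  | succ n ih =>
    rcases Nat.lt_or_ge n 2 with h2 | h2
    · have hn : n = 1 := by omega
      subst hn
      simpa using hMazur x (by simpa using hx)
    · obtain ⟨m, hm⟩ := hx
      obtain ⟨y, hy⟩ := hMazur x ⟨(p : WittVector p k₀) ^ (n - 1) • m, by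
        have he : 2 + (n - 1) = n + 1 := by omega
        rw [hm, ← smul_assoc, smul_eq_mul, ← pow_add, he]⟩
      have hFy : F y = (p : WittVector p k₀) ^ n • m := by
        have h0 : (p : WittVector p k₀) • (F y - (p : WittVector p k₀) ^ n • m) = 0 := by
          rw [smul_sub, ← hFp, ← hy, hm, ← smul_assoc, smul_eq_mul, ← pow_succ', sub_self]
        have := htf _ h0
        exact sub_eq_zero.mp this
      obtain ⟨z, hz⟩ := ih h2 y ⟨m, hFy⟩
      refine ⟨z, ?_⟩
      have he : n - 1 + 1 = n + 1 - 1 := by omega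
      rw [hy, hz, ← smul_assoc, smul_eq_mul, ← pow_succ', he]
end

section
/- (Abstract form of Corollary 2.8) For all integers j ≥ 2 and k ≥ 2 and every x ∈ M, if F^j(x) ∈ p^k • M then F^{j-1}(x) ∈ p^{k-1} • M, where F^j denotes the j-fold iterate of F. -/
/-- **Abstract form of Corollary 2.8.**
For all `j ≥ 2`, `k ≥ 2` and `x ∈ M`, if `F^[j] x ∈ p^k • M` then
`F^[j-1] x ∈ p^(k-1) • M`. -/
theorem muOrdinary_cor_2_8 (p : ℕ) [Fact p.Prime] (k₀ : Type*) [Field k₀] [CharP k₀ p]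
    [PerfectRing k₀ p]
    (M : Type*) [AddCommGroup M] [Module (WittVector p k₀) M]
    (htf : ∀ x : M, (p : WittVector p k₀) • x = 0 → x = 0)
    (F : M → M)
    (hFadd : ∀ x y : M, F (x + y) = F x + F y)
    (hFp : ∀ x : M, F ((p : WittVector p k₀) • x) = (p : WittVector p k₀) • F x)
    (hMazur : ∀ x : M, (∃ m : M, F x = (p : WittVector p k₀) ^ 2 • m) →
      ∃ m : M, x = (p : WittVector p k₀) • m)
    (j k : ℕ) (hj : 2 ≤ j) (hk : 2 ≤ k) (x : M)
    (hx : ∃ m : M, F^[j] x = (p : WittVector p k₀) ^ k • m) :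
    ∃ m : M, F^[j - 1] x = (p : WittVector p k₀) ^ (k - 1) • m := by
  set q : WittVector p k₀ := (p : WittVector p k₀) with hq
  -- Key lemma: if F y ∈ p^k • M with k ≥ 2, then y ∈ p^(k-1) • M.
  have key : ∀ k : ℕ, 2 ≤ k → ∀ y : M, (∃ m : M, F y = q ^ k • m) →
      ∃ m : M, y = q ^ (k - 1) • m := by
    intro k hk
    induction k, hk using Nat.le_induction with
    | base =>
      intro y hy
      obtain ⟨m, hm⟩ := hMazur y hy
      exact ⟨m, by simpa using hm⟩
    | succ n hn ih =>
      obtain ⟨n', rfl⟩ : ∃ n', n = n' + 1 := ⟨n - 1, by omega⟩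
      intro y ⟨m, hm⟩
      have h2 : ∃ m' : M, F y = q ^ 2 • m' := by
        refine ⟨q ^ n' • m, ?_⟩
        rw [hm, smul_smul, ← pow_add, show 2 + n' = n' + 1 + 1 from by omega]
      obtain ⟨y', hy'⟩ := hMazur y h2
      have h1 : q • F y' = q • (q ^ (n' + 1) • m) := by
        rw [← hFp, ← hy', hm, smul_smul, pow_succ']
      have hFy' : F y' = q ^ (n' + 1) • m :=
        sub_eq_zero.mp (htf _ (by rw [smul_sub, h1, sub_self]))
      obtain ⟨m', hm'⟩ := ih y' ⟨m, hFy'⟩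
      refine ⟨m', ?_⟩
      simp only [Nat.add_sub_cancel] at hm' ⊢
      rw [hy', hm', smul_smul, ← pow_succ']
  obtain ⟨j', rfl⟩ : ∃ j', j = j' + 1 := ⟨j - 1, by omega⟩
  rw [Function.iterate_succ_apply' F j' x] at hx
  simpa using key k hk (F^[j'] x) hx
end

section
/- (Abstract form of Corollary 2.9) For every integer k ≥ 1 and every x ∈ M, if F^k(x) ∈ p^k • M then F(x) ∈ p • M (equivalently, the reduction of x modulo p lies in the reduction of F⁻¹(pM), i.e. in Fil¹). -/
/-- **Abstract form of Corollary 2.9.**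
For every `k ≥ 1` and `x ∈ M`, if `F^[k] x ∈ p^k • M` then `F x ∈ p • M`
(i.e. the reduction of `x` modulo `p` lies in `Fil¹`). -/
theorem muOrdinary_cor_2_9 (p : ℕ) [Fact p.Prime] (k₀ : Type*) [Field k₀] [CharP k₀ p]
    [PerfectRing k₀ p]
    (M : Type*) [AddCommGroup M] [Module (WittVector p k₀) M]
    (htf : ∀ x : M, (p : WittVector p k₀) • x = 0 → x = 0)
    (F : M → M)
    (hFadd : ∀ x y : M, F (x + y) = F x + F y)
    (hFp : ∀ x : M, F ((p : WittVector p k₀) • x) = (p : WittVector p k₀) • F x)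
    (hMazur : ∀ x : M, (∃ m : M, F x = (p : WittVector p k₀) ^ 2 • m) →
      ∃ m : M, x = (p : WittVector p k₀) • m)
    (k : ℕ) (hk : 1 ≤ k) (x : M)
    (hx : ∃ m : M, F^[k] x = (p : WittVector p k₀) ^ k • m) :
    ∃ m : M, F x = (p : WittVector p k₀) • m := by
  set q : WittVector p k₀ := (p : WittVector p k₀) with hq
  -- Lemma A: if F z ∈ p^(j+2) M then z ∈ p^(j+1) M.
  have lemA : ∀ j : ℕ, ∀ z : M, (∃ m : M, F z = q ^ (j + 2) • m) →
      ∃ w : M, z = q ^ (j + 1) • w := by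
    intro j
    induction j with
    | zero =>
      intro z hz
      obtain ⟨w, hw⟩ := hMazur z hz
      exact ⟨w, by simpa using hw⟩
    | succ j ih =>
      intro z ⟨m, hm⟩
      obtain ⟨w, hw⟩ := hMazur z ⟨q ^ (j + 1) • m, by
        rw [hm, smul_smul, ← pow_add]; ring_nf⟩
      have hFw : F w = q ^ (j + 2) • m := by
        have : q • F w = q • (q ^ (j + 2) • m) := by
          rw [← hFp, ← hw, hm, smul_smul, ← pow_succ']
        exact sub_eq_zero.mp (htf (F w - q ^ (j + 2) • m)
          (by rw [smul_sub, this, sub_self]))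
      obtain ⟨w', hw'⟩ := ih w ⟨m, hFw⟩
      exact ⟨w', by rw [hw, hw', smul_smul, ← pow_succ']⟩
  clear hMazur
  induction k, hk using Nat.le_induction generalizing x with
  | base =>
    obtain ⟨m, hm⟩ := hx
    exact ⟨m, by simpa using hm⟩
  | succ k hk ih =>
    obtain ⟨j, rfl⟩ : ∃ j, k = j + 1 := ⟨k - 1, (Nat.succ_pred_eq_of_pos hk).symm⟩
    obtain ⟨m, hm⟩ := hx
    rw [Function.iterate_succ_apply'] at hm
    have := lemA j (F^[j + 1] x) ⟨m, hm⟩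
    exact ih x this
end

section
/- (Iterated exponent-subtraction, used in the proof of Lemma 2.11) For all integers j ≥ 2 and k ≥ 2, every integer t with 0 ≤ t ≤ min(j, k) − 1, and every x ∈ M: if F^j(x) ∈ p^k • M then F^{j-t}(x) ∈ p^{k-t} • M. -/
/-- **Iterated exponent-subtraction (used in the proof of Lemma 2.11).**
For all `j ≥ 2`, `k ≥ 2`, every `t` with `0 ≤ t ≤ min j k - 1` and every `x ∈ M`:
if `F^[j] x ∈ p^k • M` then `F^[j-t] x ∈ p^(k-t) • M`. -/
theorem muOrdinary_iterated_subtraction (p : ℕ) [Fact p.Prime] (k₀ : Type*) [Field k₀]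
    [CharP k₀ p] [PerfectRing k₀ p]
    (M : Type*) [AddCommGroup M] [Module (WittVector p k₀) M]
    (htf : ∀ x : M, (p : WittVector p k₀) • x = 0 → x = 0)
    (F : M → M)
    (hFadd : ∀ x y : M, F (x + y) = F x + F y)
    (hFp : ∀ x : M, F ((p : WittVector p k₀) • x) = (p : WittVector p k₀) • F x)
    (hMazur : ∀ x : M, (∃ m : M, F x = (p : WittVector p k₀) ^ 2 • m) →
      ∃ m : M, x = (p : WittVector p k₀) • m)
    (j k t : ℕ) (hj : 2 ≤ j) (hk : 2 ≤ k) (ht : t ≤ min j k - 1) (x : M)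
    (hx : ∃ m : M, F^[j] x = (p : WittVector p k₀) ^ k • m) :
    ∃ m : M, F^[j - t] x = (p : WittVector p k₀) ^ (k - t) • m := by
  set q : WittVector p k₀ := (p : WittVector p k₀) with hq
  -- cancellation
  have hcan : ∀ a b : M, q • a = q • b → a = b := by
    intro a b h
    have := htf (a - b) (by rw [smul_sub, h, sub_self])
    exact sub_eq_zero.mp this
  -- key lemma: if F y = p^c • m and s+1 ≤ c, then y = p^s • z with F z = p^(c-s) • m
  have key : ∀ s : ℕ, ∀ c : ℕ, ∀ y m : M, s + 1 ≤ c → F y = q ^ c • m →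
      ∃ z : M, y = q ^ s • z ∧ F z = q ^ (c - s) • m := by
    intro s
    induction s with
    | zero => intro c y m _ h; exact ⟨y, by simp, by simpa using h⟩
    | succ s ih =>
      intro c y m hsc h
      obtain ⟨z, hyz, hFz⟩ := ih c y m (by omega) h
      have hc2 : 2 ≤ c - s := by omega
      have hz' : ∃ m' : M, F z = q ^ 2 • m' := by
        refine ⟨q ^ (c - s - 2) • m, ?_⟩
        have e : c - s = 2 + (c - s - 2) := by omega
        rw [hFz]
        conv_lhs => rw [e, pow_add, mul_smul]
      obtain ⟨w, hzw⟩ := hMazur z hz'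
      have hFw : q • F w = q • (q ^ (c - (s + 1)) • m) := by
        have h1 : F (q • w) = q ^ (c - s) • m := by rw [← hzw]; exact hFz
        rw [hFp] at h1
        have e : c - s = (c - (s + 1)) + 1 := by omega
        rw [h1, e, pow_succ', mul_smul]
      refine ⟨w, ?_, hcan _ _ hFw⟩
      rw [hyz, hzw, smul_smul, ← pow_succ]
  -- main induction on t
  have main : ∀ t : ℕ, t ≤ min j k - 1 →
      ∃ m : M, F^[j - t] x = q ^ (k - t) • m := by
    intro t
    induction t with
    | zero => intro _; simpa using hx
    | succ t ih =>
      intro hts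
      obtain ⟨m, hm⟩ := ih (by omega)
      have hjt : 2 ≤ j - t := by omega
      have hkt : 2 ≤ k - t := by omega
      have hiter : F (F^[j - (t + 1)] x) = q ^ (k - t) • m := by
        have e : j - t = (j - (t + 1)) + 1 := by omega
        rw [e, Function.iterate_succ_apply'] at hm
        exact hm
      obtain ⟨z, hz, _⟩ := key (k - t - 1) (k - t) _ m (by omega) hiter
      exact ⟨z, by rw [hz, Nat.sub_sub]⟩
  exact main t ht
end

section
/- (Abstract form of Lemma 2.5) Let s ≥ 1 and let λ₁ < λ₂ < … < λ_s be natural numbers. For i ∈ {1, 2}, let M_i be a finite free W-module equipped with an additive σ-semilinear map Φ_i : M_i → M_i and an internal direct sum decomposition M_i = M_{i,1} ⊕ … ⊕ M_{i,s} such that each M_{i,j} is Φ_i-stable and (M_{i,j}, Φ_i|_{M_{i,j}}) is isoclinic of slope λ_j. Then every W-linear map φ : M_1 → M_2 satisfying φ ∘ Φ_1 = Φ_2 ∘ φ (in particular, every isogeny of such F-crystals) satisfies φ(M_{1,j}) ⊆ M_{2,j} for every j. -/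
/-- A submodule `N` of `M` is *isoclinic of slope `lam`* for the additive `σ`-semilinear
map `Φ : M → M` (in particular `Φ`-stable) if the restriction of `Φ` to `N` equals
`pW ^ lam • b` for some `σ`-semilinear additive bijection `b : N → N`. -/
def IsoclinicOn {W M : Type*} [CommRing W] [AddCommGroup M] [Module W M]
    (σ : W ≃+* W) (pW : W) (lam : ℕ) (Φ : M → M) (N : Submodule W M) : Prop :=
  ∃ b : N → N, Function.Bijective b ∧ (∀ x y : N, b (x + y) = b x + b y) ∧
    (∀ (w : W) (x : N), b (w • x) = σ w • b x) ∧ ∀ x : N, Φ (x : M) = pW ^ lam • (b x : M)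


open Function

section Helpers

variable {W : Type*} [CommRing W] {M : Type*} [AddCommGroup M] [Module W M]

private lemma components_exist {s : ℕ} (N : Fin s → Submodule W M)
    (h : ⨆ i, N i = ⊤) (m : M) :
    ∃ u : Fin s → M, (∀ i, u i ∈ N i) ∧ m = ∑ i, u i := by
  have hm : m ∈ ⨆ i ∈ (Finset.univ : Finset (Fin s)), N i := by
    simp only [Finset.mem_univ, iSup_pos, h, Submodule.mem_top]
  obtain ⟨μ, hμ⟩ := (Submodule.mem_iSup_finset_iff_exists_sum N m).mp hm
  exact ⟨fun i => (μ i : M), fun i => (μ i).2, hμ.symm⟩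

private lemma components_unique {s : ℕ} {N : Fin s → Submodule W M}
    (h : iSupIndep N) {u v : Fin s → M}
    (hu : ∀ i, u i ∈ N i) (hv : ∀ i, v i ∈ N i)
    (huv : ∑ i, u i = ∑ i, v i) (i : Fin s) : u i = v i := by
  set d : Fin s → M := fun k => u k - v k with hd
  have hdN : ∀ k, d k ∈ N k := fun k => Submodule.sub_mem _ (hu k) (hv k)
  have hsum : ∑ k, d k = 0 := by
    simp [hd, Finset.sum_sub_distrib, huv]
  have h1 : d i = - ∑ k ∈ Finset.univ.erase i, d k := by
    apply eq_neg_of_add_eq_zero_left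
    rw [Finset.add_sum_erase Finset.univ d (Finset.mem_univ i), hsum]
  have hmem : d i ∈ ⨆ (k) (_ : k ≠ i), N k := by
    rw [h1]
    refine Submodule.neg_mem _ (Submodule.sum_mem _ fun k hk => ?_)
    exact Submodule.mem_iSup_of_mem k
      (Submodule.mem_iSup_of_mem (Finset.ne_of_mem_erase hk) (hdN k))
  have : d i ∈ (⊥ : Submodule W M) := (h i).le_bot ⟨hdN i, hmem⟩
  have : d i = 0 := by simpa using this
  exact sub_eq_zero.mp this

private lemma eq_zero_of_forall_pow_dvd {W : Type*} [CommRing W] [IsDomain W]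
    [IsNoetherianRing W] {M : Type*} [AddCommGroup M] [Module W M]
    [Module.Free W M] [Module.Finite W M]
    (q : W) (hq : ¬ IsUnit q) (m : M) (hm : ∀ n : ℕ, ∃ z : M, m = q ^ n • z) : m = 0 := by
  let B := Module.Free.chooseBasis W M
  have hzero : ∀ i, B.repr m i = 0 := by
    intro i
    have hbot : ⨅ n : ℕ, (Ideal.span {q}) ^ n = ⊥ :=
      Ideal.iInf_pow_eq_bot_of_isDomain _ (by
        simpa [Ideal.span_singleton_eq_top] using hq)
    have hdvd : B.repr m i ∈ ⨅ n : ℕ, (Ideal.span {q}) ^ n := by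
      rw [Submodule.mem_iInf]
      intro n
      obtain ⟨z, hz⟩ := hm n
      rw [Ideal.span_singleton_pow, Ideal.mem_span_singleton, hz, map_smul]
      exact ⟨B.repr z i, by simp [smul_eq_mul]⟩
    rw [hbot] at hdvd
    simpa using hdvd
  have : B.repr m = 0 := Finsupp.ext hzero
  exact B.repr.map_eq_zero_iff.mp this

/-- Iterates of an isoclinic structure. -/
private lemma iterate_stuff {σ : W ≃+* W} {pW : W} (hσp : σ pW = pW)
    {Φ : M → M} (hadd : ∀ x y : M, Φ (x + y) = Φ x + Φ y)
    (hsemi : ∀ (w : W) (x : M), Φ (w • x) = σ w • Φ x)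
    {lam : ℕ} {N : Submodule W M}
    (h : ∃ b : N → N, Function.Bijective b ∧ (∀ x y : N, b (x + y) = b x + b y) ∧
      (∀ (w : W) (x : N), b (w • x) = σ w • b x) ∧ ∀ x : N, Φ (x : M) = pW ^ lam • (b x : M)) :
    ∃ c : ℕ → N → N, (∀ n, Function.Bijective (c n)) ∧
      (∀ (n m : ℕ) (x : N), c n (pW ^ m • x) = pW ^ m • c n x) ∧
      (∀ (n : ℕ) (x : N), Φ^[n] (x : M) = pW ^ (n * lam) • (c n x : M)) := by
  obtain ⟨b, hbij, hbadd, hbsemi, hΦb⟩ := h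
  have hσpow : ∀ m : ℕ, σ (pW ^ m) = pW ^ m := fun m => by rw [map_pow, hσp]
  have key1 : ∀ (n m : ℕ) (x : N), b^[n] (pW ^ m • x) = pW ^ m • b^[n] x := by
    intro n m
    induction n with
    | zero => intro x; rfl
    | succ n ih =>
      intro x
      rw [Function.iterate_succ_apply', Function.iterate_succ_apply', ih, hbsemi, hσpow]
  have key2 : ∀ (n : ℕ) (x : N), Φ^[n] (x : M) = pW ^ (n * lam) • (b^[n] x : M) := by
    intro n
    induction n with
    | zero => intro x; simp
    | succ n ih =>
      intro x
      rw [Function.iterate_succ_apply', ih, Function.iterate_succ_apply' b, hsemi, hσpow, hΦb,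
        smul_smul, ← pow_add, Nat.succ_mul, Nat.add_comm (n * lam) lam]
  exact ⟨fun n => b^[n], fun n => hbij.iterate n, key1, key2⟩

end Helpers


/-- **Abstract form of Lemma 2.5.**
Over `W = W(k₀)`, with `σ` a fixed power of the Witt-vector Frobenius automorphism:
let `s ≥ 1` and `λ₁ < … < λ_s` be natural numbers, and for `i ∈ {1, 2}` let `Mᵢ` be a
finite free `W`-module with an additive `σ`-semilinear map `Φᵢ` and an internal direct
sum decomposition `Mᵢ = ⊕ⱼ Mᵢⱼ` into `Φᵢ`-stable submodules with `(Mᵢⱼ, Φᵢ)` isoclinic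
of slope `λⱼ`.  Then every `W`-linear map `φ : M₁ → M₂` with `φ ∘ Φ₁ = Φ₂ ∘ φ`
(in particular, every isogeny) satisfies `φ (M₁ⱼ) ⊆ M₂ⱼ` for every `j`. -/
theorem muOrdinary_lemma_2_5 (p : ℕ) [Fact p.Prime] (k₀ : Type*) [Field k₀] [CharP k₀ p]
    [PerfectRing k₀ p]
    (σ : WittVector p k₀ ≃+* WittVector p k₀)
    (hσ : ∃ t : ℕ, σ = (WittVector.frobeniusEquiv p k₀) ^ t)
    (s : ℕ) (hs : 1 ≤ s) (lam : Fin s → ℕ) (hlam : StrictMono lam)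
    (M₁ M₂ : Type*) [AddCommGroup M₁] [Module (WittVector p k₀) M₁]
    [Module.Free (WittVector p k₀) M₁] [Module.Finite (WittVector p k₀) M₁]
    [AddCommGroup M₂] [Module (WittVector p k₀) M₂]
    [Module.Free (WittVector p k₀) M₂] [Module.Finite (WittVector p k₀) M₂]
    (Φ₁ : M₁ → M₁) (Φ₂ : M₂ → M₂)
    (hΦ₁add : ∀ x y : M₁, Φ₁ (x + y) = Φ₁ x + Φ₁ y)
    (hΦ₁semi : ∀ (w : WittVector p k₀) (x : M₁), Φ₁ (w • x) = σ w • Φ₁ x)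
    (hΦ₂add : ∀ x y : M₂, Φ₂ (x + y) = Φ₂ x + Φ₂ y)
    (hΦ₂semi : ∀ (w : WittVector p k₀) (x : M₂), Φ₂ (w • x) = σ w • Φ₂ x)
    (N₁ : Fin s → Submodule (WittVector p k₀) M₁)
    (N₂ : Fin s → Submodule (WittVector p k₀) M₂)
    (hN₁ : DirectSum.IsInternal N₁) (hN₂ : DirectSum.IsInternal N₂)
    (hiso₁ : ∀ j : Fin s, IsoclinicOn σ (p : WittVector p k₀) (lam j) Φ₁ (N₁ j))
    (hiso₂ : ∀ j : Fin s, IsoclinicOn σ (p : WittVector p k₀) (lam j) Φ₂ (N₂ j))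
    (φ : M₁ →ₗ[WittVector p k₀] M₂) (hφ : ∀ x : M₁, φ (Φ₁ x) = Φ₂ (φ x)) :
    ∀ j : Fin s, (N₁ j).map φ ≤ N₂ j := by
  classical
  intro j y0 hy0
  rw [Submodule.mem_map] at hy0
  obtain ⟨x, hx, rfl⟩ := hy0
  -- basic ring facts
  have hσp : σ ((p : ℕ) : WittVector p k₀) = ((p : ℕ) : WittVector p k₀) := map_natCast σ p
  have hirr : Irreducible ((p : ℕ) : WittVector p k₀) := WittVector.irreducible p
  have hp0 : ((p : ℕ) : WittVector p k₀) ≠ 0 := hirr.ne_zero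
  have hpu : ¬ IsUnit ((p : ℕ) : WittVector p k₀) := hirr.not_isUnit
  have hDVR := WittVector.isDiscreteValuationRing (p := p) (k := k₀)
  haveI := hDVR.toIsPrincipalIdealRing
  -- iterate data
  obtain ⟨c₁, hc₁bij, hc₁smul, hc₁Φ⟩ := iterate_stuff hσp hΦ₁add hΦ₁semi (hiso₁ j)
  choose c₂ hc₂bij hc₂smul hc₂Φ using fun i => iterate_stuff hσp hΦ₂add hΦ₂semi (hiso₂ i)
  -- φ commutes with iterates
  have hφΦ : ∀ (n : ℕ) (z : M₁), φ (Φ₁^[n] z) = Φ₂^[n] (φ z) := by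
    intro n
    induction n with
    | zero => intro z; rfl
    | succ n ih =>
      intro z
      rw [Function.iterate_succ_apply', hφ, ih]
      exact (Function.iterate_succ_apply' Φ₂ n (φ z)).symm
  -- sums through iterates of Φ₂
  have hΦ₂n_sum : ∀ (n : ℕ) (u : Fin s → M₂), Φ₂^[n] (∑ i, u i) = ∑ i, Φ₂^[n] (u i) := by
    intro n
    have hadd : ∀ a b : M₂, Φ₂^[n] (a + b) = Φ₂^[n] a + Φ₂^[n] b := by
      induction n with
      | zero => intro a b; rfl
      | succ n ih =>
        intro a b
        rw [Function.iterate_succ_apply', Function.iterate_succ_apply',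
          Function.iterate_succ_apply', ih, hΦ₂add]
    intro u
    exact map_sum (AddMonoidHom.mk' (Φ₂^[n]) hadd) u Finset.univ
  -- decompose φ x
  obtain ⟨y, hyN, hysum⟩ := components_exist N₂ hN₂.submodule_iSup_eq_top (φ x)
  have hindep := hN₂.submodule_iSupIndep
  -- key vanishing
  have key : ∀ k, k ≠ j → y k = 0 := by
    intro k hk
    apply eq_zero_of_forall_pow_dvd ((p : ℕ) : WittVector p k₀) hpu
    intro n
    have hne : lam k ≠ lam j := fun h => hk (hlam.injective h)
    rcases hne.lt_or_gt with hlt | hgt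
    · -- lam k < lam j
      obtain ⟨u, huN, husum⟩ :=
        components_exist N₂ hN₂.submodule_iSup_eq_top (φ ((c₁ n ⟨x, hx⟩ : N₁ j) : M₁))
      have h1 : Φ₁^[n] x
          = ((p : ℕ) : WittVector p k₀) ^ (n * lam j) • ((c₁ n ⟨x, hx⟩ : N₁ j) : M₁) :=
        hc₁Φ n ⟨x, hx⟩
      have hE1 : φ (Φ₁^[n] x) = ∑ i, ((p : ℕ) : WittVector p k₀) ^ (n * lam j) • u i := by
        rw [h1, map_smul, husum, Finset.smul_sum]
      have hE2 : φ (Φ₁^[n] x)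
          = ∑ i, ((p : ℕ) : WittVector p k₀) ^ (n * lam i) • ((c₂ i n ⟨y i, hyN i⟩ : N₂ i) : M₂) := by
        rw [hφΦ n x, hysum, hΦ₂n_sum]
        exact Finset.sum_congr rfl fun i _ => hc₂Φ i n ⟨y i, hyN i⟩
      have hcomp := components_unique hindep
        (fun i => Submodule.smul_mem _ _ (c₂ i n ⟨y i, hyN i⟩).2)
        (fun i => Submodule.smul_mem _ _ (huN i))
        (hE2.symm.trans hE1) k
      -- p^{nλk} • ↑(c₂ k n ŷ) = p^{nλj} • u k
      have ha : n * lam k + n * (lam j - lam k) = n * lam j := by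
        rw [← Nat.mul_add, Nat.add_sub_cancel' hlt.le]
      rw [← ha, pow_add, mul_smul] at hcomp
      have hc : ((c₂ k n ⟨y k, hyN k⟩ : N₂ k) : M₂)
          = ((p : ℕ) : WittVector p k₀) ^ (n * (lam j - lam k)) • u k :=
        smul_right_injective M₂ (pow_ne_zero _ hp0) hcomp
      obtain ⟨w, hw⟩ := (hc₂bij k n).surjective ⟨u k, huN k⟩
      have h2 : c₂ k n (((p : ℕ) : WittVector p k₀) ^ (n * (lam j - lam k)) • w)
          = c₂ k n ⟨y k, hyN k⟩ := by
        rw [hc₂smul k n, hw]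
        exact Subtype.ext (by rw [Submodule.coe_smul]; exact hc.symm)
      have h3 := (hc₂bij k n).injective h2
      have h4 : y k = ((p : ℕ) : WittVector p k₀) ^ (n * (lam j - lam k)) • (w : M₂) := by
        have := congrArg (fun z : N₂ k => (z : M₂)) h3
        simpa using this.symm
      have hnle : n ≤ n * (lam j - lam k) :=
        Nat.le_mul_of_pos_right n (by omega)
      refine ⟨((p : ℕ) : WittVector p k₀) ^ (n * (lam j - lam k) - n) • (w : M₂), ?_⟩
      rw [h4, smul_smul, ← pow_add, Nat.add_sub_cancel' hnle]
    · -- lam j < lam k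
      obtain ⟨x', hx'⟩ := (hc₁bij n).surjective ⟨x, hx⟩
      obtain ⟨u, huN, husum⟩ :=
        components_exist N₂ hN₂.submodule_iSup_eq_top (φ ((x' : N₁ j) : M₁))
      have hcx : ((c₁ n x' : N₁ j) : M₁) = x := by rw [hx']
      have hE1 : φ (Φ₁^[n] ((x' : N₁ j) : M₁))
          = ∑ i, ((p : ℕ) : WittVector p k₀) ^ (n * lam j) • y i := by
        rw [hc₁Φ n x', hcx, map_smul, hysum, Finset.smul_sum]
      have hE2 : φ (Φ₁^[n] ((x' : N₁ j) : M₁))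
          = ∑ i, ((p : ℕ) : WittVector p k₀) ^ (n * lam i) • ((c₂ i n ⟨u i, huN i⟩ : N₂ i) : M₂) := by
        rw [hφΦ, husum, hΦ₂n_sum]
        exact Finset.sum_congr rfl fun i _ => hc₂Φ i n ⟨u i, huN i⟩
      have hcomp := components_unique hindep
        (fun i => Submodule.smul_mem _ _ (hyN i))
        (fun i => Submodule.smul_mem _ _ (c₂ i n ⟨u i, huN i⟩).2)
        (hE1.symm.trans hE2) k
      -- p^{nλj} • y k = p^{nλk} • ↑(c₂ k n û)
      have ha : n * lam j + n * (lam k - lam j) = n * lam k := by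
        rw [← Nat.mul_add, Nat.add_sub_cancel' hgt.le]
      rw [← ha, pow_add, mul_smul] at hcomp
      have hc : y k = ((p : ℕ) : WittVector p k₀) ^ (n * (lam k - lam j)) •
          ((c₂ k n ⟨u k, huN k⟩ : N₂ k) : M₂) :=
        smul_right_injective M₂ (pow_ne_zero _ hp0) hcomp
      have hnle : n ≤ n * (lam k - lam j) :=
        Nat.le_mul_of_pos_right n (by omega)
      refine ⟨((p : ℕ) : WittVector p k₀) ^ (n * (lam k - lam j) - n) •
        ((c₂ k n ⟨u k, huN k⟩ : N₂ k) : M₂), ?_⟩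
      rw [hc, smul_smul, ← pow_add, Nat.add_sub_cancel' hnle]
  have hfin : φ x = y j := by
    rw [hysum]
    exact Finset.sum_eq_single_of_mem j (Finset.mem_univ j) fun k _ hk => key k hk
  rw [hfin]
  exact hyN j
end

section
/- (Diagonal form of F^e on Moonen's standard μ-ordinary module, Appendix A) For every x ∈ M, every i ∈ ℤ/eℤ and every j ∈ {1, …, n}, one has (F^e x)(i, j) = p^{a_j} · σ^e(x(i, j)), where a_j = card{ i' ∈ ℤ/eℤ : f(i') > n − j }. In other words, F^e preserves each slot i and acts there as the diagonal matrix diag(p^{a_1}, …, p^{a_n}) composed with σ^e. -/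
/-- The Frobenius `F` of Moonen's standard μ-ordinary Dieudonné module.
The module is `M = (ℤ/eℤ × {1, …, n}) → W(k₀)` (the index `j ∈ {1, …, n}` is encoded by
`j : Fin n`, representing `j.val + 1`), and `F` is the additive `σ`-semilinear map given
by `(F x)(i, j) = c(i−1, j) · σ(x(i−1, j))`, where `c(i, j) = p` if `f(i) > n − j` and
`c(i, j) = 1` otherwise; here `σ` is the Witt-vector Frobenius automorphism. -/
noncomputable def moonenFrobenius (p : ℕ) [Fact p.Prime] (k₀ : Type*) [Field k₀]
    [CharP k₀ p] [PerfectRing k₀ p] (e n : ℕ) [NeZero e] (f : ZMod e → ℕ) :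
    ((ZMod e × Fin n) → WittVector p k₀) → ((ZMod e × Fin n) → WittVector p k₀) :=
  fun x ij =>
    (if n < f (ij.1 - 1) + (ij.2.val + 1) then (p : WittVector p k₀) else 1) *
      WittVector.frobeniusEquiv p k₀ (x (ij.1 - 1, ij.2))

theorem key (p : ℕ) [Fact p.Prime] (k₀ : Type*) [Field k₀]
    [CharP k₀ p] [PerfectRing k₀ p]
    (e n : ℕ) [NeZero e] (f : ZMod e → ℕ)
    (x : (ZMod e × Fin n) → WittVector p k₀) (j : Fin n) (m : ℕ) :
    ∀ i : ZMod e, (moonenFrobenius p k₀ e n f)^[m] x (i, j) =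
      (∏ k ∈ Finset.range m,
        (if n < f (i - (k : ZMod e) - 1) + (j.val + 1) then (p : WittVector p k₀) else 1)) *
      (⇑(WittVector.frobeniusEquiv p k₀))^[m] (x (i - (m : ZMod e), j)) := by
  induction m with
  | zero => intro i; simp
  | succ m ih =>
    intro i
    rw [Function.iterate_succ_apply']
    have : (moonenFrobenius p k₀ e n f)
        ((moonenFrobenius p k₀ e n f)^[m] x) (i, j) =
        (if n < f (i - 1) + (j.val + 1) then (p : WittVector p k₀) else 1) *
          WittVector.frobeniusEquiv p k₀ ((moonenFrobenius p k₀ e n f)^[m] x (i - 1, j)) := rfl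
    rw [this, ih (i - 1), map_mul, map_prod]
    rw [Function.iterate_succ_apply']
    have hσ : ∀ k : ℕ, (WittVector.frobeniusEquiv p k₀)
        (if n < f (i - 1 - (k : ZMod e) - 1) + (j.val + 1) then (p : WittVector p k₀) else 1)
        = (if n < f (i - (↑(k+1) : ZMod e) - 1) + (j.val + 1) then (p : WittVector p k₀) else 1) := by
      intro k
      have : i - 1 - (k : ZMod e) - 1 = i - (↑(k+1) : ZMod e) - 1 := by push_cast; ring
      rw [this]
      split <;> simp
    simp only [hσ]
    rw [Finset.prod_range_succ']
    have hi : i - 1 - (m : ZMod e) = i - (↑(m+1) : ZMod e) := by push_cast; ring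
    rw [hi, mul_left_comm, ← mul_assoc]
    norm_num


/-- **Diagonal form of `F^e` on Moonen's standard μ-ordinary module (Appendix A).**
For every `x ∈ M`, every `i ∈ ℤ/eℤ` and every `j ∈ {1, …, n}` one has
`(F^e x)(i, j) = p^(a_j) · σ^e(x(i, j))`, where
`a_j = card { i' ∈ ℤ/eℤ : f(i') > n − j }`; i.e. `F^e` preserves each slot `i` and acts
there as `diag(p^(a_1), …, p^(a_n))` composed with `σ^e`. -/
theorem muOrdinary_appendixA_diagonal (p : ℕ) [Fact p.Prime] (k₀ : Type*) [Field k₀]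
    [CharP k₀ p] [PerfectRing k₀ p]
    (e n : ℕ) [NeZero e] (hn : 1 ≤ n) (f : ZMod e → ℕ) (hf : ∀ i : ZMod e, f i ≤ n)
    (x : (ZMod e × Fin n) → WittVector p k₀) (i : ZMod e) (j : Fin n) :
    (moonenFrobenius p k₀ e n f)^[e] x (i, j) =
      (p : WittVector p k₀) ^
          (Finset.univ.filter fun i' : ZMod e => n < f i' + (j.val + 1)).card *
        (⇑(WittVector.frobeniusEquiv p k₀))^[e] (x (i, j)) := by
  rw [key p k₀ e n f x j e i]
  have he : ((e : ZMod e)) = 0 := ZMod.natCast_self e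
  rw [he, sub_zero]
  congr 1
  have hbij : ∏ k ∈ Finset.range e,
      (if n < f (i - (k : ZMod e) - 1) + (j.val + 1) then (p : WittVector p k₀) else 1)
      = ∏ i' : ZMod e, (if n < f i' + (j.val + 1) then (p : WittVector p k₀) else 1) := by
    refine Finset.prod_nbij' (fun k => i - (k : ZMod e) - 1) (fun i' => (i - i' - 1).val) ?_ ?_ ?_ ?_ ?_
    · intro k hk; exact Finset.mem_univ _
    · intro i' _; simp [Finset.mem_range, ZMod.val_lt]
    · intro k hk
      simp only [Finset.mem_range] at hk
      have h2 : (i - (i - (k : ZMod e) - 1) - 1) = (k : ZMod e) := by ring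
      rw [h2]
      exact ZMod.val_cast_of_lt hk
    · intro i' _
      rw [ZMod.natCast_val, ZMod.cast_id]
      ring
    · intro k hk; rfl
  rw [hbij, ← Finset.prod_filter, Finset.prod_const]
end

section
/- (Combinatorial content of Proposition B.3 and Corollary B.4: the μ-ordinary locus is the maximal p-rank stratum, of p-rank 2ar) Let λ_1 ≤ λ_2 ≤ … ≤ λ_{2g} be a nondecreasing sequence of nonnegative rational numbers that is symmetric and lies on or above ν. Then card{ i : λ_i = 0 } ≤ 2ar; and if card{ i : λ_i = 0 } = 2ar, then λ_i = ν_i for all i. -/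
/-- The μ-ordinary slope sequence of Lemma B.2 (indexed by `Fin (2 * ((a+b)*r))`,
with `i : Fin _` representing the `(i.val + 1)`-st slope): `0` with multiplicity `2ar`,
`1/2` with multiplicity `2(b-a)r`, and `1` with multiplicity `2ar`. -/
def muOrdinarySlopes (a b r : ℕ) : Fin (2 * ((a + b) * r)) → ℚ :=
  fun i => if (i : ℕ) < 2 * a * r then 0 else if (i : ℕ) < 2 * b * r then 1 / 2 else 1

/-- For a monotone nonnegative sequence on `Fin (2 * ((a + b) * r))`, the set of zeros is exactly the
initial segment of length `card {i : λ i = 0}`. -/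
lemma zeros_segment {N : ℕ} (lam : Fin N → ℚ) (hmono : Monotone lam)
    (hnonneg : ∀ i, 0 ≤ lam i) (i : Fin N) :
    lam i = 0 ↔ (i : ℕ) < (Finset.univ.filter fun j => lam j = 0).card := by
  set S := Finset.univ.filter fun j => lam j = 0 with hS
  have hdown : ∀ i j : Fin N, i ≤ j → lam j = 0 → lam i = 0 := fun i j hij hj =>
    le_antisymm (hj ▸ hmono hij) (hnonneg i)
  constructor
  · intro hi
    have hsub : Finset.Iic i ⊆ S := by
      intro j hj
      simp only [Finset.mem_Iic] at hj
      simp only [hS, Finset.mem_filter, Finset.mem_univ, true_and]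
      exact hdown j i hj hi
    have := Finset.card_le_card hsub
    rw [Fin.card_Iic] at this
    omega
  · intro hi
    by_contra h
    have hsub : S ⊆ Finset.Iio i := by
      intro j hj
      simp only [hS, Finset.mem_filter, Finset.mem_univ, true_and] at hj
      simp only [Finset.mem_Iio]
      by_contra hji
      exact h (hdown i j (le_of_not_gt hji) hj)
    have := Finset.card_le_card hsub
    rw [Fin.card_Iio] at this
    omega

/-- **Combinatorial content of Proposition B.3 and Corollary B.4: the μ-ordinary locus
is the maximal `p`-rank stratum, of `p`-rank `2ar`.**
Let `g = (a+b)r` with `r ≥ 1` and `a < b`, and let `ν` be the μ-ordinary slope sequence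
of Lemma B.2.  Let `λ₁ ≤ … ≤ λ_{2g}` be a nondecreasing sequence of nonnegative rational
numbers which is symmetric (`λ_i + λ_{2g+1−i} = 1` for all `i`) and lies on or above `ν`
(`λ₁ + ⋯ + λ_m ≥ ν₁ + ⋯ + ν_m` for all `1 ≤ m ≤ 2g`).  Then the `p`-rank
`card {i : λ_i = 0}` is at most `2ar`, and if it equals `2ar` then `λ = ν`. -/
theorem muOrdinary_prop_B_3_cor_B_4 (a b r : ℕ) (hr : 1 ≤ r) (hab : a < b)
    (lam : Fin (2 * ((a + b) * r)) → ℚ)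
    (hmono : Monotone lam)
    (hnonneg : ∀ i, 0 ≤ lam i)
    (hsymm : ∀ i, lam i + lam i.rev = 1)
    (habove : ∀ m : ℕ, 1 ≤ m → m ≤ 2 * ((a + b) * r) →
      ∑ i ∈ Finset.univ.filter (fun i : Fin (2 * ((a + b) * r)) => (i : ℕ) < m),
          muOrdinarySlopes a b r i ≤
        ∑ i ∈ Finset.univ.filter (fun i : Fin (2 * ((a + b) * r)) => (i : ℕ) < m), lam i) :
    (Finset.univ.filter fun i => lam i = 0).card ≤ 2 * a * r ∧
      ((Finset.univ.filter fun i => lam i = 0).card = 2 * a * r →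
        ∀ i, lam i = muOrdinarySlopes a b r i) := by
  have hNsplit : 2 * ((a + b) * r) = 2 * a * r + 2 * b * r := by ring
  have hablt : 2 * a * r < 2 * b * r := by
    have : 2 * a < 2 * b := by omega
    exact Nat.mul_lt_mul_of_lt_of_le this (le_refl r) hr
  have hnu_nonneg : ∀ i : Fin (2 * ((a + b) * r)), 0 ≤ muOrdinarySlopes a b r i := by
    intro i
    unfold muOrdinarySlopes
    split_ifs <;> norm_num
  set k := (Finset.univ.filter fun i => lam i = 0).card with hk
  have hseg : ∀ i : Fin (2 * ((a + b) * r)), lam i = 0 ↔ (i : ℕ) < k :=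
    fun i => zeros_segment lam hmono hnonneg i
  have hkN : k ≤ 2 * ((a + b) * r) := by
    calc k ≤ Finset.univ.card := Finset.card_filter_le _ _
    _ = 2 * ((a + b) * r) := by simp
  -- Part 1
  have part1 : k ≤ 2 * a * r := by
    by_contra hcon
    push_neg at hcon
    have hk1 : 1 ≤ k := by omega
    have hsum := habove k hk1 hkN
    have hlamsum : ∑ i ∈ Finset.univ.filter (fun i : Fin (2 * ((a + b) * r)) => (i : ℕ) < k), lam i = 0 := by
      apply Finset.sum_eq_zero
      intro i hi
      simp only [Finset.mem_filter] at hi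
      exact (hseg i).mpr hi.2
    have hi0N : 2 * a * r < 2 * ((a + b) * r) := by omega
    set i0 : Fin (2 * ((a + b) * r)) := ⟨2 * a * r, hi0N⟩ with hi0
    have hi0mem : i0 ∈ Finset.univ.filter (fun i : Fin (2 * ((a + b) * r)) => (i : ℕ) < k) := by
      simp [hi0, hcon]
    have hnu0 : muOrdinarySlopes a b r i0 = 1 / 2 := by
      unfold muOrdinarySlopes
      simp [hi0, hablt]
    have hle : (1 : ℚ) / 2 ≤
        ∑ i ∈ Finset.univ.filter (fun i : Fin (2 * ((a + b) * r)) => (i : ℕ) < k), muOrdinarySlopes a b r i := by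
      rw [← hnu0]
      exact Finset.single_le_sum (fun i _ => hnu_nonneg i) hi0mem
    rw [hlamsum] at hsum
    linarith
  refine ⟨part1, ?_⟩
  -- Part 2
  intro hcard i
  have hseg' : ∀ i : Fin (2 * ((a + b) * r)), lam i = 0 ↔ (i : ℕ) < 2 * a * r := by
    intro i; rw [hseg i, hcard]
  have hmid : ∀ i : Fin (2 * ((a + b) * r)), 2 * a * r ≤ (i : ℕ) → (i : ℕ) < 2 * b * r → 1 / 2 ≤ lam i := by
    by_contra hcon
    push_neg at hcon
    obtain ⟨j, hj1, hj2, hj3⟩ := hcon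
    set m := (j : ℕ) + 1 with hm
    have hsum := habove m (by omega) (by have := j.isLt; omega)
    have hlt : ∑ i ∈ Finset.univ.filter (fun i : Fin (2 * ((a + b) * r)) => (i : ℕ) < m),
        muOrdinarySlopes a b r i >
        ∑ i ∈ Finset.univ.filter (fun i : Fin (2 * ((a + b) * r)) => (i : ℕ) < m), lam i := by
      apply Finset.sum_lt_sum
      · intro i hi
        simp only [Finset.mem_filter] at hi
        by_cases h1 : (i : ℕ) < 2 * a * r
        · rw [(hseg' i).mpr h1]
          exact hnu_nonneg i
        · have hile : i ≤ j := by
            rw [Fin.le_def]; omega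
          have : muOrdinarySlopes a b r i = 1 / 2 := by
            unfold muOrdinarySlopes
            have : (i : ℕ) < 2 * b * r := by omega
            simp [h1, this]
          rw [this]
          calc lam i ≤ lam j := hmono hile
          _ ≤ 1 / 2 := le_of_lt hj3
      · refine ⟨j, ?_, ?_⟩
        · simp [hm]
        · have : muOrdinarySlopes a b r j = 1 / 2 := by
            unfold muOrdinarySlopes
            simp [Nat.not_lt.mpr hj1, hj2]
          rw [this]
          exact hj3
    linarith
  have hmid2 : ∀ i : Fin (2 * ((a + b) * r)), 2 * a * r ≤ (i : ℕ) → (i : ℕ) < 2 * b * r → lam i = 1 / 2 := by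
    intro i h1 h2
    have hrev : (i.rev : ℕ) = 2 * ((a + b) * r) - 1 - i := by
      rw [Fin.val_rev]; omega
    have hrev1 : 2 * a * r ≤ (i.rev : ℕ) := by omega
    have hrev2 : (i.rev : ℕ) < 2 * b * r := by have := i.isLt; omega
    have h3 := hmid i h1 h2
    have h4 := hmid i.rev hrev1 hrev2
    have h5 := hsymm i
    linarith
  unfold muOrdinarySlopes
  split_ifs with h1 h2
  · exact (hseg' i).mpr h1
  · exact hmid2 i (by omega) h2
  · have hrev : (i.rev : ℕ) = 2 * ((a + b) * r) - 1 - i := by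
      rw [Fin.val_rev]; omega
    have : lam i.rev = 0 := by
      apply (hseg' i.rev).mpr
      have := i.isLt; omega
    have h5 := hsymm i
    linarith
end
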